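/- Any drawing of K_{1,4,n} contains n induced drawings of K_{1,4,n-1} (one for each suppressed vertex of the size-n part), and counting crossings over these yields: (n-1)·cr_φ(E_{XY}, ∪_i E(z_i)) + (n-2)·cr_φ(∪_i E(z_i)) ≥ n·cr(K_{1,4,n-1}). -/

import Mathlib

open Set

/-- The Zarankiewicz function `Z(m,n) = ⌊m/2⌋⌊(m-1)/2⌋⌊n/2⌋⌊(n-1)/2⌋`. -/
def Z (m n : ℕ) : ℕ := (m / 2) * ((m - 1) / 2) * (n / 2) * ((n - 1) / 2)

/-- A good drawing of a simple graph `G` in the plane: vertices are distinct points,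
each edge is a simple arc joining its endpoints, arcs avoid vertices in their interiors,
adjacent edges do not cross, two edges meet in at most one interior point, and no point
of the plane lies on (the interiors of) three distinct edges. -/
structure GoodDrawing {V : Type*} (G : SimpleGraph V) where
  vert : V → ℝ × ℝ
  vert_inj : Function.Injective vert
  arc : G.edgeSet → ℝ → ℝ × ℝ
  arc_cont : ∀ e, ContinuousOn (arc e) (Set.Icc 0 1)
  arc_inj : ∀ e, Set.InjOn (arc e) (Set.Icc 0 1)
  arc_ends : ∀ e : G.edgeSet, ∃ a b, (e : Sym2 V) = s(a, b) ∧
    arc e 0 = vert a ∧ arc e 1 = vert b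
  arc_avoids_vert : ∀ e, ∀ t ∈ Set.Ioo (0 : ℝ) 1, arc e t ∉ Set.range vert
  adj_no_cross : ∀ e e' : G.edgeSet, e ≠ e' → (∃ v, v ∈ (e : Sym2 V) ∧ v ∈ (e' : Sym2 V)) →
    ∀ s ∈ Set.Ioo (0 : ℝ) 1, ∀ t ∈ Set.Ioo (0 : ℝ) 1, arc e s ≠ arc e' t
  cross_at_most_one : ∀ e e' : G.edgeSet, e ≠ e' →
    Set.Subsingleton (arc e '' Set.Ioo 0 1 ∩ arc e' '' Set.Ioo 0 1)
  no_triple_point : ∀ p : ℝ × ℝ, ∀ e₁ e₂ e₃ : G.edgeSet,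
    p ∈ arc e₁ '' Set.Ioo 0 1 → p ∈ arc e₂ '' Set.Ioo 0 1 → p ∈ arc e₃ '' Set.Ioo 0 1 →
    e₁ = e₂ ∨ e₁ = e₃ ∨ e₂ = e₃

namespace GoodDrawing

variable {V : Type*} {G : SimpleGraph V} (D : GoodDrawing G)

/-- The set of crossing points between an edge of `A` and an edge of `B`. -/
def crossings (A B : Set G.edgeSet) : Set (ℝ × ℝ) :=
  {p | ∃ e ∈ A, ∃ e' ∈ B, e ≠ e' ∧ p ∈ D.arc e '' Set.Ioo 0 1 ∧ p ∈ D.arc e' '' Set.Ioo 0 1}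

/-- `cr_φ(A,B)`: the number of crossings between an edge of `A` and an edge of `B`. -/
noncomputable def crCount (A B : Set G.edgeSet) : ℕ := Nat.card (D.crossings A B)

/-- The total number of crossings of the drawing. -/
noncomputable def crossNum : ℕ := D.crCount Set.univ Set.univ

/-- The image (underlying point set) of the drawing. -/
def image : Set (ℝ × ℝ) := Set.range D.vert ∪ ⋃ e : G.edgeSet, D.arc e '' Set.Icc 0 1

/-- A region of the drawing: a connected component of the complement of its image. -/
def IsRegion (C : Set (ℝ × ℝ)) : Prop :=
  ∃ p ∉ D.image, C = connectedComponentIn (D.image)ᶜ p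

end GoodDrawing

/-- The crossing number of a graph: the least number of crossings in a good drawing. -/
noncomputable def crossingNumber {V : Type*} (G : SimpleGraph V) : ℕ :=
  sInf {n | ∃ D : GoodDrawing G, D.crossNum = n}

/-- Isomorphism of drawings: a homeomorphism of the plane carrying one drawing to the
other, respecting the graph structure via some graph automorphism. -/
def DrawingIso {V : Type*} {G : SimpleGraph V} (D D' : GoodDrawing G) : Prop :=
  ∃ (h : ℝ × ℝ ≃ₜ ℝ × ℝ) (σ : G ≃g G),
    (∀ v, h (D.vert v) = D'.vert (σ v)) ∧
    (∀ e : G.edgeSet, h '' (D.arc e '' Set.Icc 0 1) = D'.arc (σ.mapEdgeSet e) '' Set.Icc 0 1)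


section AUX
open SimpleGraph

def skipF {n : ℕ} (i : Fin n) (j : Fin (n-1)) : Fin n :=
  if (j : ℕ) < (i : ℕ) then ⟨j, by have := j.2; have := i.2; omega⟩
  else ⟨j+1, by have := j.2; have := i.2; omega⟩

lemma skipF_ne {n : ℕ} (i : Fin n) (j : Fin (n-1)) : skipF i j ≠ i := by
  unfold skipF; split <;> (intro h; rw [Fin.ext_iff] at h; simp at h; omega)

lemma skipF_inj {n : ℕ} (i : Fin n) : Function.Injective (skipF i) := by
  intro a b h
  unfold skipF at h; rw [Fin.ext_iff] at h ⊢
  split at h <;> split at h <;> simp_all <;> omega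

lemma skipF_surj {n : ℕ} (i k : Fin n) (hk : k ≠ i) : ∃ j, skipF i j = k := by
  rw [Ne, Fin.ext_iff] at hk
  have h2 := k.2; have h3 := i.2
  rcases lt_or_gt_of_ne hk with h | h
  · exact ⟨⟨k, by omega⟩, by unfold skipF; rw [if_pos (by simpa using h)]⟩
  · refine ⟨⟨k-1, by omega⟩, ?_⟩
    unfold skipF; rw [if_neg (by simp; omega)]; simp [Fin.ext_iff]; omega

def vmap {n : ℕ} (i : Fin n) : (Σ j : Fin 3, ![Fin 1, Fin 4, Fin (n-1)] j) → Σ j : Fin 3, ![Fin 1, Fin 4, Fin n] j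
  | ⟨⟨0, _⟩, a⟩ => ⟨0, a⟩
  | ⟨⟨1, _⟩, a⟩ => ⟨1, a⟩
  | ⟨⟨2, _⟩, a⟩ => ⟨2, skipF i a⟩

lemma vmap_fst {n : ℕ} (i : Fin n) (v) : (vmap i v).1 = v.1 := by
  obtain ⟨⟨j, hj⟩, a⟩ := v
  interval_cases j <;> rfl

lemma vmap_inj {n : ℕ} (i : Fin n) : Function.Injective (vmap i) := by
  intro v w h
  obtain ⟨⟨j, hj⟩, a⟩ := v; obtain ⟨⟨k, hk⟩, b⟩ := w
  interval_cases j <;> interval_cases k <;>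
    simp only [vmap, Sigma.ext_iff, Fin.mk.injEq, heq_eq_eq] at h
  all_goals first
    | (obtain ⟨h1, h2⟩ := h; omega)
    | (cases h.2; rfl)
    | (cases skipF_inj i (eq_of_heq h.2); rfl)

lemma vmap_ne {n : ℕ} (i : Fin n) (v) : vmap i v ≠ ⟨2, i⟩ := by
  obtain ⟨⟨j, hj⟩, a⟩ := v
  interval_cases j <;> simp only [vmap, ne_eq, Sigma.ext_iff, not_and, Fin.mk.injEq]
  · intro h; omega
  · intro h; omega
  · intro _ h; exact skipF_ne i a (eq_of_heq h)

lemma vmap_surj {n : ℕ} (i : Fin n) (v : Σ j : Fin 3, ![Fin 1, Fin 4, Fin n] j)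
    (hv : v ≠ ⟨2, i⟩) : ∃ w, vmap i w = v := by
  obtain ⟨⟨j, hj⟩, a⟩ := v
  interval_cases j
  · exact ⟨⟨0, a⟩, rfl⟩
  · exact ⟨⟨1, a⟩, rfl⟩
  · have ha : a ≠ i := fun h => hv (by subst h; rfl)
    obtain ⟨b, hb⟩ := skipF_surj i a ha
    refine ⟨⟨2, b⟩, ?_⟩
    show (⟨2, skipF i b⟩ : Σ j : Fin 3, ![Fin 1, Fin 4, Fin n] j) = _
    rw [hb]; rfl

def gemb {n : ℕ} (i : Fin n) :
    completeMultipartiteGraph ![Fin 1, Fin 4, Fin (n-1)] ↪g completeMultipartiteGraph ![Fin 1, Fin 4, Fin n] where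
  toFun := vmap i
  inj' := vmap_inj i
  map_rel_iff' := by
    intro a b
    simp only [completeMultipartiteGraph, comap_adj, top_adj, Function.Embedding.coeFn_mk]
    rw [vmap_fst, vmap_fst]


open GoodDrawing

variable {V V' : Type*} {G : SimpleGraph V} {G' : SimpleGraph V'}

lemma mapEdgeSet_coe (f : G' ↪g G) (e : G'.edgeSet) :
    ((f.mapEdgeSet e : G.edgeSet) : Sym2 V) = Sym2.map f e := rfl

/-- Restrict a good drawing along a graph embedding. -/
def GoodDrawing.comap (f : G' ↪g G) (D : GoodDrawing G) : GoodDrawing G' where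
  vert := D.vert ∘ f
  vert_inj := D.vert_inj.comp f.injective
  arc e := D.arc (f.mapEdgeSet e)
  arc_cont e := D.arc_cont _
  arc_inj e := D.arc_inj _
  arc_ends e := by
    obtain ⟨a, b, hab, h0, h1⟩ := D.arc_ends (f.mapEdgeSet e)
    obtain ⟨⟨a', b'⟩, he⟩ := Quot.exists_rep (e : Sym2 V')
    have he' : (e : Sym2 V') = s(a', b') := he.symm
    rw [mapEdgeSet_coe, he', Sym2.map_pair_eq, Sym2.eq_iff] at hab
    rcases hab with ⟨ha, hb⟩ | ⟨ha, hb⟩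
    · exact ⟨a', b', he', by show D.arc (f.mapEdgeSet e) 0 = D.vert (f a'); rw [h0, ha], by show D.arc (f.mapEdgeSet e) 1 = D.vert (f b'); rw [h1, hb]⟩
    · exact ⟨b', a', by rw [he', Sym2.eq_swap], by show D.arc (f.mapEdgeSet e) 0 = D.vert (f b'); rw [h0, hb], by show D.arc (f.mapEdgeSet e) 1 = D.vert (f a'); rw [h1, ha]⟩
  arc_avoids_vert e t ht hmem := by
    refine D.arc_avoids_vert (f.mapEdgeSet e) t ht ?_
    obtain ⟨v, hv⟩ := hmem
    exact ⟨f v, hv⟩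
  adj_no_cross e e' hne hshare := by
    refine D.adj_no_cross _ _ (fun h => hne (f.mapEdgeSet.injective h)) ?_
    obtain ⟨v, hv, hv'⟩ := hshare
    exact ⟨f v, by rw [mapEdgeSet_coe]; exact Sym2.mem_map.2 ⟨v, hv, rfl⟩,
      by rw [mapEdgeSet_coe]; exact Sym2.mem_map.2 ⟨v, hv', rfl⟩⟩
  cross_at_most_one e e' hne :=
    D.cross_at_most_one _ _ (fun h => hne (f.mapEdgeSet.injective h))
  no_triple_point p e₁ e₂ e₃ h1 h2 h3 := by
    rcases D.no_triple_point p _ _ _ h1 h2 h3 with h | h | h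
    · exact Or.inl (f.mapEdgeSet.injective h)
    · exact Or.inr (Or.inl (f.mapEdgeSet.injective h))
    · exact Or.inr (Or.inr (f.mapEdgeSet.injective h))

lemma comap_crossings (f : G' ↪g G) (D : GoodDrawing G) :
    (D.comap f).crossings Set.univ Set.univ
      = D.crossings (Set.range (f.mapEdgeSet)) (Set.range (f.mapEdgeSet)) := by
  ext p
  constructor
  · rintro ⟨e, -, e', -, hne, hp, hp'⟩
    exact ⟨f.mapEdgeSet e, ⟨e, rfl⟩, f.mapEdgeSet e', ⟨e', rfl⟩,
      fun h => hne (f.mapEdgeSet.injective h), hp, hp'⟩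
  · rintro ⟨d, ⟨e, rfl⟩, d', ⟨e', rfl⟩, hne, hp, hp'⟩
    exact ⟨e, trivial, e', trivial, fun h => hne (by rw [h]), hp, hp'⟩

lemma crossingNumber_le_comap (f : G' ↪g G) (D : GoodDrawing G) :
    crossingNumber G' ≤ D.crCount (Set.range (f.mapEdgeSet)) (Set.range (f.mapEdgeSet)) := by
  have : (D.comap f).crossNum
      = D.crCount (Set.range (f.mapEdgeSet)) (Set.range (f.mapEdgeSet)) := by
    unfold GoodDrawing.crossNum GoodDrawing.crCount
    rw [comap_crossings]
  exact this ▸ Nat.sInf_le ⟨D.comap f, rfl⟩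

lemma crossings_finite [Finite V] (D : GoodDrawing G) (A B : Set G.edgeSet) :
    (D.crossings A B).Finite := by
  classical
  have : D.crossings A B ⊆ ⋃ (e : G.edgeSet), ⋃ (e' : G.edgeSet),
      if e = e' then ∅ else D.arc e '' Set.Ioo 0 1 ∩ D.arc e' '' Set.Ioo 0 1 := by
    rintro p ⟨e, -, e', -, hne, hp, hp'⟩
    refine Set.mem_iUnion.2 ⟨e, Set.mem_iUnion.2 ⟨e', ?_⟩⟩
    rw [if_neg hne]; exact ⟨hp, hp'⟩
  refine Set.Finite.subset (Set.finite_iUnion fun e => Set.finite_iUnion fun e' => ?_) this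
  split
  · exact Set.finite_empty
  · exact Set.Subsingleton.finite (D.cross_at_most_one _ _ (by assumption))



end AUX
section Specific
open SimpleGraph

variable {n : ℕ}

instance vtFinite : Finite (Σ j : Fin 3, ![Fin 1, Fin 4, Fin n] j) := by
  haveI : ∀ j : Fin 3, Finite (![Fin 1, Fin 4, Fin n] j) := by
    intro j; fin_cases j
    · exact inferInstanceAs (Finite (Fin 1))
    · exact inferInstanceAs (Finite (Fin 4))
    · exact inferInstanceAs (Finite (Fin n))
  infer_instance

lemma edge_two_mem {G : SimpleGraph (Σ j : Fin 3, ![Fin 1, Fin 4, Fin n] j)}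
    (hG : G = completeMultipartiteGraph ![Fin 1, Fin 4, Fin n])
    (d : G.edgeSet) (u v : Σ j : Fin 3, ![Fin 1, Fin 4, Fin n] j)
    (hu : u ∈ (d : Sym2 _)) (hv : v ∈ (d : Sym2 _)) (huv : u ≠ v) : u.1 ≠ v.1 := by
  have hd : (d : Sym2 _) = s(u, v) := (Sym2.mem_and_mem_iff huv).1 ⟨hu, hv⟩
  have := d.2
  rw [hd, SimpleGraph.mem_edgeSet, hG] at this
  exact this

lemma range_mapEdgeSet (i : Fin n) :
    Set.range ((gemb i).mapEdgeSet) =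
      {d : (completeMultipartiteGraph ![Fin 1, Fin 4, Fin n]).edgeSet |
        (⟨2, i⟩ : Σ j : Fin 3, ![Fin 1, Fin 4, Fin n] j) ∉ (d : Sym2 _)} := by
  ext d
  constructor
  · rintro ⟨e, rfl⟩ hmem
    rw [mapEdgeSet_coe] at hmem
    obtain ⟨w, -, hw⟩ := Sym2.mem_map.1 hmem
    exact vmap_ne i w hw
  · intro hd
    obtain ⟨⟨a, b⟩, he⟩ := Quot.exists_rep (d : Sym2 (Σ j : Fin 3, ![Fin 1, Fin 4, Fin n] j))
    have hd' : (d : Sym2 (Σ j : Fin 3, ![Fin 1, Fin 4, Fin n] j)) = s(a, b) := he.symm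
    have hadj : (completeMultipartiteGraph ![Fin 1, Fin 4, Fin n]).Adj a b := by
      have := d.2; rwa [hd', SimpleGraph.mem_edgeSet] at this
    have ha : a ≠ ⟨2, i⟩ := fun h => hd (by rw [hd', h]; exact Sym2.mem_mk_left _ _)
    have hb : b ≠ ⟨2, i⟩ := fun h => hd (by rw [hd', h]; exact Sym2.mem_mk_right _ _)
    obtain ⟨a', ha'⟩ := vmap_surj i a ha
    obtain ⟨b', hb'⟩ := vmap_surj i b hb
    have hadj' : (completeMultipartiteGraph ![Fin 1, Fin 4, Fin (n-1)]).Adj a' b' := by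
      simp only [completeMultipartiteGraph, comap_adj, top_adj] at hadj ⊢
      rw [← vmap_fst i a', ← vmap_fst i b', ha', hb']; exact hadj
    refine ⟨⟨s(a', b'), (SimpleGraph.mem_edgeSet _).2 hadj'⟩, ?_⟩
    apply Subtype.ext
    rw [mapEdgeSet_coe, hd']
    show Sym2.map (vmap i) s(a', b') = _
    rw [Sym2.map_pair_eq, ha', hb']

lemma edge_cases (d : (completeMultipartiteGraph ![Fin 1, Fin 4, Fin n]).edgeSet) :
    (∀ v ∈ (d : Sym2 (Σ j : Fin 3, ![Fin 1, Fin 4, Fin n] j)), Sigma.fst v ≠ 2) ∨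
      ∃ m : Fin n, (⟨2, m⟩ : Σ j : Fin 3, ![Fin 1, Fin 4, Fin n] j) ∈
        (d : Sym2 (Σ j : Fin 3, ![Fin 1, Fin 4, Fin n] j)) := by
  by_cases h : ∀ v ∈ (d : Sym2 (Σ j : Fin 3, ![Fin 1, Fin 4, Fin n] j)), Sigma.fst v ≠ 2
  · exact Or.inl h
  · push_neg at h
    obtain ⟨v, hv, hv2⟩ := h
    obtain ⟨j, a⟩ := v
    right
    simp only at hv2
    subst hv2
    exact ⟨a, hv⟩

lemma exy_mem_x0 (d : (completeMultipartiteGraph ![Fin 1, Fin 4, Fin n]).edgeSet)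
    (hd : ∀ v ∈ (d : Sym2 (Σ j : Fin 3, ![Fin 1, Fin 4, Fin n] j)), Sigma.fst v ≠ 2) :
    (⟨0, (0 : Fin 1)⟩ : Σ j : Fin 3, ![Fin 1, Fin 4, Fin n] j) ∈
      (d : Sym2 (Σ j : Fin 3, ![Fin 1, Fin 4, Fin n] j)) := by
  obtain ⟨⟨a, b⟩, he⟩ := Quot.exists_rep (d : Sym2 (Σ j : Fin 3, ![Fin 1, Fin 4, Fin n] j))
  have hd' : (d : Sym2 _) = s(a, b) := he.symm
  have hadj : (completeMultipartiteGraph ![Fin 1, Fin 4, Fin n]).Adj a b := by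
    have := d.2; rwa [hd', SimpleGraph.mem_edgeSet] at this
  have hne : a.1 ≠ b.1 := by
    simpa only [completeMultipartiteGraph, comap_adj, top_adj] using hadj
  have ha2 : a.1 ≠ 2 := hd a (by rw [hd']; exact Sym2.mem_mk_left _ _)
  have hb2 : b.1 ≠ 2 := hd b (by rw [hd']; exact Sym2.mem_mk_right _ _)
  have hne' : (a.1 : ℕ) ≠ (b.1 : ℕ) := fun h => hne (Fin.ext h)
  have ha2' : (a.1 : ℕ) ≠ 2 := fun h => ha2 (Fin.ext h)
  have hb2' : (b.1 : ℕ) ≠ 2 := fun h => hb2 (Fin.ext h)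
  have h2a := a.1.2
  have h2b := b.1.2
  have h0 : (a.1 : ℕ) = 0 ∨ (b.1 : ℕ) = 0 := by omega
  rw [hd']
  rcases h0 with h | h
  · obtain ⟨j, u⟩ := a
    have hj : j = 0 := Fin.ext h
    subst hj
    have hu : u = (0 : Fin 1) := Subsingleton.elim (α := Fin 1) u _
    subst hu
    exact Sym2.mem_mk_left _ _
  · obtain ⟨j, u⟩ := b
    have hj : j = 0 := Fin.ext h
    subst hj
    have hu : u = (0 : Fin 1) := Subsingleton.elim (α := Fin 1) u _
    subst hu
    exact Sym2.mem_mk_right _ _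

end Specific

/-- The counting inequality for drawings of `K_{1,4,n}`: deleting each vertex of the
size-`n` part in turn gives `n` drawings of `K_{1,4,n-1}`, whence
`(n-1)·cr_φ(E_{XY}, ∪ᵢ E(zᵢ)) + (n-2)·cr_φ(∪ᵢ E(zᵢ)) ≥ n·cr(K_{1,4,n-1})`. -/
theorem K14n_counting (n : ℕ) (hn : 1 ≤ n)
    (D : GoodDrawing (SimpleGraph.completeMultipartiteGraph ![Fin 1, Fin 4, Fin n]))
    (E : (Σ i : Fin 3, ![Fin 1, Fin 4, Fin n] i) →
      Set (SimpleGraph.completeMultipartiteGraph ![Fin 1, Fin 4, Fin n]).edgeSet)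
    (hE : ∀ v, E v = {e | v ∈ (e : Sym2 (Σ i : Fin 3, ![Fin 1, Fin 4, Fin n] i))})
    (EXY : Set (SimpleGraph.completeMultipartiteGraph ![Fin 1, Fin 4, Fin n]).edgeSet)
    (hEXY : EXY =
      {e | ∀ v ∈ (e : Sym2 (Σ i : Fin 3, ![Fin 1, Fin 4, Fin n] i)), Sigma.fst v ≠ 2})
    (z : Fin n → Σ i : Fin 3, ![Fin 1, Fin 4, Fin n] i) (hz : ∀ i, z i = ⟨2, i⟩) :
    (n - 1) * D.crCount EXY (⋃ i, E (z i)) +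
      (n - 2) * D.crCount (⋃ i, E (z i)) (⋃ i, E (z i)) ≥
    n * crossingNumber
      (SimpleGraph.completeMultipartiteGraph ![Fin 1, Fin 4, Fin (n - 1)]) := by
    classical
  rw [ge_iff_le]
  -- notation
  set U : Set (SimpleGraph.completeMultipartiteGraph ![Fin 1, Fin 4, Fin n]).edgeSet :=
    ⋃ i, E (z i) with hUdef
  show n * crossingNumber (SimpleGraph.completeMultipartiteGraph ![Fin 1, Fin 4, Fin (n-1)]) ≤
    (n - 1) * Nat.card (D.crossings EXY U) + (n - 2) * Nat.card (D.crossings U U)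
  -- membership lemmas
  have hzmem : ∀ (i : Fin n) (d : (SimpleGraph.completeMultipartiteGraph ![Fin 1, Fin 4, Fin n]).edgeSet),
      d ∈ E (z i) ↔ (⟨2, i⟩ : Σ j : Fin 3, ![Fin 1, Fin 4, Fin n] j) ∈
        (d : Sym2 (Σ j : Fin 3, ![Fin 1, Fin 4, Fin n] j)) := by
    intro i d
    constructor
    · intro h
      have hm : (d : Sym2 (Σ j : Fin 3, ![Fin 1, Fin 4, Fin n] j)) ∈ Subtype.val '' E (z i) :=
        ⟨d, h, rfl⟩
      rw [hE, hz] at hm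
      exact hm
    · intro h
      have hm : (d : Sym2 (Σ j : Fin 3, ![Fin 1, Fin 4, Fin n] j)) ∈ Subtype.val '' E (z i) := by
        rw [hE, hz]; exact h
      obtain ⟨d2, hd2, hval⟩ := hm
      rwa [Subtype.val_injective hval] at hd2
  have hUmem : ∀ d, d ∈ U ↔ ∃ m : Fin n, (⟨2, m⟩ : Σ j : Fin 3, ![Fin 1, Fin 4, Fin n] j) ∈
      (d : Sym2 (Σ j : Fin 3, ![Fin 1, Fin 4, Fin n] j)) := by
    intro d
    rw [hUdef]
    simp only [Set.mem_iUnion]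
    exact exists_congr fun i => hzmem i d
  have hEXYmem : ∀ d, d ∈ EXY ↔ ∀ v ∈ (d : Sym2 (Σ j : Fin 3, ![Fin 1, Fin 4, Fin n] j)),
      Sigma.fst v ≠ 2 := by
    intro d
    constructor
    · intro h
      have hm : (d : Sym2 (Σ j : Fin 3, ![Fin 1, Fin 4, Fin n] j)) ∈ Subtype.val '' EXY :=
        ⟨d, h, rfl⟩
      rw [hEXY] at hm
      exact hm
    · intro h
      have hm : (d : Sym2 (Σ j : Fin 3, ![Fin 1, Fin 4, Fin n] j)) ∈ Subtype.val '' EXY := by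
        rw [hEXY]; exact h
      obtain ⟨d2, hd2, hval⟩ := hm
      rwa [Subtype.val_injective hval] at hd2
  have hexy_not_z : ∀ d ∈ EXY, ∀ m : Fin n,
      (⟨2, m⟩ : Σ j : Fin 3, ![Fin 1, Fin 4, Fin n] j) ∉
        (d : Sym2 (Σ j : Fin 3, ![Fin 1, Fin 4, Fin n] j)) :=
    fun d hd m hm => (hEXYmem d).1 hd _ hm rfl
  have fact_not_both : ∀ (d : (SimpleGraph.completeMultipartiteGraph ![Fin 1, Fin 4, Fin n]).edgeSet)
      (i j : Fin n),
      (⟨2, i⟩ : Σ j : Fin 3, ![Fin 1, Fin 4, Fin n] j) ∈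
        (d : Sym2 (Σ j : Fin 3, ![Fin 1, Fin 4, Fin n] j)) →
      (⟨2, j⟩ : Σ j : Fin 3, ![Fin 1, Fin 4, Fin n] j) ∈
        (d : Sym2 (Σ j : Fin 3, ![Fin 1, Fin 4, Fin n] j)) → i = j := by
    intro d i j hi hj
    by_contra hij
    have hne : (⟨2, i⟩ : Σ j : Fin 3, ![Fin 1, Fin 4, Fin n] j) ≠ ⟨2, j⟩ :=
      fun h => hij (eq_of_heq (Sigma.mk.inj_iff.1 h).2)
    exact edge_two_mem rfl d _ _ hi hj hne rfl
  have no_common : ∀ (d d' : (SimpleGraph.completeMultipartiteGraph ![Fin 1, Fin 4, Fin n]).edgeSet)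
      (v : Σ j : Fin 3, ![Fin 1, Fin 4, Fin n] j), d ≠ d' →
      v ∈ (d : Sym2 (Σ j : Fin 3, ![Fin 1, Fin 4, Fin n] j)) →
      v ∈ (d' : Sym2 (Σ j : Fin 3, ![Fin 1, Fin 4, Fin n] j)) →
      ∀ p : ℝ × ℝ, p ∈ D.arc d '' Set.Ioo 0 1 → p ∈ D.arc d' '' Set.Ioo 0 1 → False := by
    rintro d d' v hne hv hv' p ⟨s, hs, hps⟩ ⟨t, ht, hpt⟩
    exact D.adj_no_cross d d' hne ⟨v, hv, hv'⟩ s hs t ht (hps.trans hpt.symm)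
  -- the family of "avoiding z i" edge sets and crossing sets
  set A : Fin n → Set (SimpleGraph.completeMultipartiteGraph ![Fin 1, Fin 4, Fin n]).edgeSet :=
    fun i => {d | (⟨2, i⟩ : Σ j : Fin 3, ![Fin 1, Fin 4, Fin n] j) ∉
      (d : Sym2 (Σ j : Fin 3, ![Fin 1, Fin 4, Fin n] j))} with hAdef
  set S : Fin n → Set (ℝ × ℝ) := fun i => D.crossings (A i) (A i) with hSdef
  have hK : ∀ i : Fin n,
      crossingNumber (SimpleGraph.completeMultipartiteGraph ![Fin 1, Fin 4, Fin (n-1)]) ≤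
        Nat.card (S i) := by
    intro i
    have h := crossingNumber_le_comap (gemb i) D
    rwa [range_mapEdgeSet i] at h
  -- key inclusion
  have key : ∀ i : Fin n, S i ⊆ D.crossings EXY U ∪ D.crossings U U := by
    intro i p hpS
    obtain ⟨d, hd, d', hd', hdd, hp, hp'⟩ := hpS
    rcases edge_cases d with h1 | ⟨m, hm⟩
    · rcases edge_cases d' with h2 | ⟨m', hm'⟩
      · exact absurd (no_common d d' ⟨0, (0 : Fin 1)⟩ hdd (exy_mem_x0 d h1) (exy_mem_x0 d' h2)
          p hp hp') not_false
      · exact Or.inl ⟨d, (hEXYmem d).2 h1, d', (hUmem d').2 ⟨m', hm'⟩, hdd, hp, hp'⟩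
    · rcases edge_cases d' with h2 | ⟨m', hm'⟩
      · exact Or.inl ⟨d', (hEXYmem d').2 h2, d, (hUmem d).2 ⟨m, hm⟩, hdd.symm, hp', hp⟩
      · exact Or.inr ⟨d, (hUmem d).2 ⟨m, hm⟩, d', (hUmem d').2 ⟨m', hm'⟩, hdd, hp, hp'⟩
  -- counting per crossing point
  have count1 : ∀ p ∈ D.crossings EXY U,
      (Finset.univ.filter fun i : Fin n => p ∈ S i).card = n - 1 := by
    rintro p ⟨e, he, e', he', hee, hp, hp'⟩
    obtain ⟨l, hl⟩ := (hUmem e').1 he'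
    have hfilter : (Finset.univ.filter fun i : Fin n => p ∈ S i) = Finset.univ.erase l := by
      ext i
      simp only [Finset.mem_filter, Finset.mem_univ, true_and, Finset.mem_erase, and_true]
      constructor
      · intro hpS hil
        subst hil
        obtain ⟨c, hc, c', hc', hcc, hq, hq'⟩ := hpS
        rcases D.no_triple_point p c c' e' hq hq' hp' with h | h | h
        · exact hcc h
        · exact hc (by rw [h]; exact hl)
        · exact hc' (by rw [h]; exact hl)
      · intro hil
        refine ⟨e, hexy_not_z e he i, e', fun hmem => hil (fact_not_both e' i l hmem hl),
          hee, hp, hp'⟩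
    rw [hfilter, Finset.card_erase_of_mem (Finset.mem_univ l), Finset.card_univ, Fintype.card_fin]
  have count2 : ∀ p ∈ D.crossings U U,
      (Finset.univ.filter fun i : Fin n => p ∈ S i).card = n - 2 := by
    rintro p ⟨d, hd, d', hd', hdd, hp, hp'⟩
    obtain ⟨j, hj⟩ := (hUmem d).1 hd
    obtain ⟨l, hl⟩ := (hUmem d').1 hd'
    have hjl : j ≠ l := by
      intro h
      subst h
      exact no_common d d' _ hdd hj hl p hp hp'
    have hfilter : (Finset.univ.filter fun i : Fin n => p ∈ S i) =
        (Finset.univ.erase j).erase l := by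
      ext i
      simp only [Finset.mem_filter, Finset.mem_univ, true_and, Finset.mem_erase, and_true]
      constructor
      · intro hpS
        obtain ⟨c, hc, c', hc', hcc, hq, hq'⟩ := hpS
        constructor
        · intro hil
          subst hil
          rcases D.no_triple_point p c c' d' hq hq' hp' with h | h | h
          · exact hcc h
          · exact hc (by rw [h]; exact hl)
          · exact hc' (by rw [h]; exact hl)
        · intro hij
          subst hij
          rcases D.no_triple_point p c c' d hq hq' hp with h | h | h
          · exact hcc h
          · exact hc (by rw [h]; exact hj)
          · exact hc' (by rw [h]; exact hj)
      · rintro ⟨hil, hij⟩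
        refine ⟨d, fun hmem => hij (fact_not_both d i j hmem hj),
          d', fun hmem => hil (fact_not_both d' i l hmem hl), hdd, hp, hp'⟩
    rw [hfilter, Finset.card_erase_of_mem
        (Finset.mem_erase.2 ⟨hjl.symm, Finset.mem_univ l⟩),
      Finset.card_erase_of_mem (Finset.mem_univ j), Finset.card_univ, Fintype.card_fin]
    omega
  have disj : Disjoint (D.crossings EXY U) (D.crossings U U) := by
    rw [Set.disjoint_left]
    rintro p ⟨e, he, e', he', hee, hp, hp'⟩ ⟨d, hd, d', hd', hdd, hq, hq'⟩
    obtain ⟨m, hm⟩ := (hUmem d).1 hd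
    obtain ⟨m', hm'⟩ := (hUmem d').1 hd'
    rcases D.no_triple_point p e d d' hp hq hq' with h | h | h
    · exact hexy_not_z e he m (by rw [h]; exact hm)
    · exact hexy_not_z e he m' (by rw [h]; exact hm')
    · exact hdd h
  -- finiteness
  have hT1 : (D.crossings EXY U).Finite := crossings_finite D _ _
  have hT2 : (D.crossings U U).Finite := crossings_finite D _ _
  have hSf : ∀ i : Fin n, (S i).Finite := fun i => crossings_finite D _ _
  have hF : (D.crossings EXY U ∪ D.crossings U U).Finite := hT1.union hT2
  -- per-i card via filter over the union
  have hcardS : ∀ i : Fin n,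
      Nat.card (S i) = (hF.toFinset.filter fun p => p ∈ S i).card := by
    intro i
    rw [Nat.card_coe_set_eq, Set.ncard_eq_toFinset_card _ (hSf i)]
    congr 1
    ext p
    simp only [Set.Finite.mem_toFinset, Finset.mem_filter]
    exact ⟨fun h => ⟨key i h, h⟩, And.right⟩
  -- the computation
  calc n * crossingNumber (SimpleGraph.completeMultipartiteGraph ![Fin 1, Fin 4, Fin (n-1)])
      = ∑ _i : Fin n,
          crossingNumber (SimpleGraph.completeMultipartiteGraph ![Fin 1, Fin 4, Fin (n-1)]) := by
        rw [Finset.sum_const, Finset.card_univ, Fintype.card_fin, smul_eq_mul]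
    _ ≤ ∑ i : Fin n, Nat.card (S i) := Finset.sum_le_sum fun i _ => hK i
    _ = ∑ i : Fin n, (hF.toFinset.filter fun p => p ∈ S i).card :=
        Finset.sum_congr rfl fun i _ => hcardS i
    _ = ∑ i : Fin n, ∑ p ∈ hF.toFinset, if p ∈ S i then 1 else 0 :=
        Finset.sum_congr rfl fun i _ => Finset.card_filter _ _
    _ = ∑ p ∈ hF.toFinset, ∑ i : Fin n, if p ∈ S i then 1 else 0 := Finset.sum_comm
    _ = ∑ p ∈ hF.toFinset, (Finset.univ.filter fun i : Fin n => p ∈ S i).card :=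
        Finset.sum_congr rfl fun p _ => (Finset.card_filter _ _).symm
    _ = (n - 1) * Nat.card (D.crossings EXY U) + (n - 2) * Nat.card (D.crossings U U) := by
        rw [show hF.toFinset = hT1.toFinset ∪ hT2.toFinset from Set.Finite.toFinset_union _ _ _,
          Finset.sum_union (Set.Finite.disjoint_toFinset.2 disj)]
        rw [Finset.sum_congr rfl fun p hp => count1 p (hT1.mem_toFinset.1 hp),
          Finset.sum_congr rfl fun p hp => count2 p (hT2.mem_toFinset.1 hp),
          Finset.sum_const, Finset.sum_const, smul_eq_mul, smul_eq_mul,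
          Nat.card_coe_set_eq, Nat.card_coe_set_eq,
          Set.ncard_eq_toFinset_card _ hT1, Set.ncard_eq_toFinset_card _ hT2,
          mul_comm (hT1.toFinset.card), mul_comm (hT2.toFinset.card)]
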